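/- For t > 0, ∫_{−t}^{t} (t/√(t²−y²)) ( I_1(√(t²−y²)) − J_1(√(t²−y²)) ) dy = 2 cosh t + 2 cos t − 4. -/

import Mathlib

open Real


/-- Modified Bessel function of the first kind, order 0. -/
noncomputable def besselI0 (r : ℝ) : ℝ :=
  ∑' k : ℕ, (r / 2) ^ (2 * k) / ((Nat.factorial k : ℝ)) ^ 2

/-- Bessel function of the first kind, order 0. -/
noncomputable def besselJ0 (r : ℝ) : ℝ :=
  ∑' k : ℕ, (-1 : ℝ) ^ k * (r / 2) ^ (2 * k) / ((Nat.factorial k : ℝ)) ^ 2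

/-- Modified Bessel function of the first kind, order 1. -/
noncomputable def besselI1 (r : ℝ) : ℝ :=
  ∑' k : ℕ, (r / 2) ^ (2 * k + 1) / ((Nat.factorial k : ℝ) * (Nat.factorial (k + 1)))

/-- Bessel function of the first kind, order 1. -/
noncomputable def besselJ1 (r : ℝ) : ℝ :=
  ∑' k : ℕ, (-1 : ℝ) ^ k * (r / 2) ^ (2 * k + 1) / ((Nat.factorial k : ℝ) * (Nat.factorial (k + 1)))

/-- Modified Bessel function of the first kind, order 2. -/
noncomputable def besselI2 (r : ℝ) : ℝ :=
  ∑' k : ℕ, (r / 2) ^ (2 * k + 2) / ((Nat.factorial k : ℝ) * (Nat.factorial (k + 2)))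

/-- Bessel function of the first kind, order 2. -/
noncomputable def besselJ2 (r : ℝ) : ℝ :=
  ∑' k : ℕ, (-1 : ℝ) ^ k * (r / 2) ^ (2 * k + 2) / ((Nat.factorial k : ℝ) * (Nat.factorial (k + 2)))


open MeasureTheory

section Aux

lemma summable_aux (s : ℕ → ℝ) (hs : ∀ k, |s k| ≤ 1) (r : ℝ) :
    Summable fun k : ℕ => s k * (r / 2) ^ (2 * k + 1) / ((Nat.factorial k : ℝ) * (Nat.factorial (k + 1))) := by
  apply Summable.of_norm
  apply Summable.of_nonneg_of_le (fun k => norm_nonneg _) (fun k => ?_)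
    ((Real.summable_pow_div_factorial (r ^ 2 / 4)).mul_left (|r| / 2))
  have hk : (0:ℝ) < (Nat.factorial k : ℝ) := by positivity
  have hk1 : (1:ℝ) ≤ (Nat.factorial (k + 1) : ℝ) := by
    exact_mod_cast Nat.one_le_iff_ne_zero.mpr (Nat.factorial_ne_zero _)
  have h1 : ‖s k * (r / 2) ^ (2 * k + 1) / ((Nat.factorial k : ℝ) * (Nat.factorial (k + 1)))‖
      = |s k| * (|r| / 2) ^ (2 * k + 1) / ((Nat.factorial k : ℝ) * (Nat.factorial (k + 1))) := by
    rw [Real.norm_eq_abs, abs_div, abs_mul, abs_pow, abs_div, abs_two,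
      abs_of_pos (by positivity : (0:ℝ) < (Nat.factorial k : ℝ) * (Nat.factorial (k + 1)))]
  rw [h1]
  calc |s k| * (|r| / 2) ^ (2 * k + 1) / ((Nat.factorial k : ℝ) * (Nat.factorial (k + 1)))
      ≤ 1 * (|r| / 2) ^ (2 * k + 1) / ((Nat.factorial k : ℝ) * 1) := by
        gcongr <;> first | exact hs k | exact hk1 | positivity
    _ = |r| / 2 * ((r ^ 2 / 4) ^ k / (Nat.factorial k : ℝ)) := by
        have : (|r| / 2) ^ (2 * k + 1) = (r ^ 2 / 4) ^ k * (|r| / 2) := by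
          rw [pow_succ, pow_mul]
          congr 2
          rw [div_pow, sq_abs]
          norm_num
        rw [this]
        field_simp


/-- coefficient -/
noncomputable def Ck (t : ℝ) (k : ℕ) : ℝ :=
  (1 - (-1 : ℝ) ^ k) * t / (2 ^ (2 * k + 1) * ((Nat.factorial k : ℝ) * (Nat.factorial (k + 1))))

lemma pointwise_eq (t : ℝ) (y : ℝ) (hy : t ^ 2 - y ^ 2 ≥ 0) :
    t / Real.sqrt (t ^ 2 - y ^ 2) *
        (besselI1 (Real.sqrt (t ^ 2 - y ^ 2)) - besselJ1 (Real.sqrt (t ^ 2 - y ^ 2)))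
      = ∑' k : ℕ, Ck t k * (t ^ 2 - y ^ 2) ^ k := by
  rcases eq_or_lt_of_le hy with h0 | hpos
  · -- t^2 - y^2 = 0
    have h0' : t ^ 2 - y ^ 2 = 0 := h0.symm
    have : ∀ k : ℕ, Ck t k * (t ^ 2 - y ^ 2) ^ k = 0 := by
      intro k
      rcases Nat.eq_zero_or_pos k with hk | hk
      · subst hk; simp [Ck]
      · rw [h0', zero_pow hk.ne', mul_zero]
    rw [tsum_congr this, tsum_zero, h0', Real.sqrt_zero, div_zero, zero_mul]
  · set r := Real.sqrt (t ^ 2 - y ^ 2) with hr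
    have hrpos : 0 < r := Real.sqrt_pos.mpr hpos
    have hr2 : r ^ 2 = t ^ 2 - y ^ 2 := Real.sq_sqrt hpos.le
    have hI : Summable fun k : ℕ =>
        (r / 2) ^ (2 * k + 1) / ((Nat.factorial k : ℝ) * (Nat.factorial (k + 1))) := by
      have := summable_aux (fun _ => 1) (fun k => by norm_num) r
      simpa using this
    have hJ : Summable fun k : ℕ =>
        (-1 : ℝ) ^ k * (r / 2) ^ (2 * k + 1) / ((Nat.factorial k : ℝ) * (Nat.factorial (k + 1))) :=
      summable_aux (fun k => (-1) ^ k) (fun k => by simp) r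
    have hsub : besselI1 r - besselJ1 r
        = ∑' k : ℕ, ((r / 2) ^ (2 * k + 1) / ((Nat.factorial k : ℝ) * (Nat.factorial (k + 1)))
            - (-1 : ℝ) ^ k * (r / 2) ^ (2 * k + 1) / ((Nat.factorial k : ℝ) * (Nat.factorial (k + 1)))) := by
      rw [besselI1, besselJ1]; exact (Summable.tsum_sub hI hJ).symm
    rw [hsub, ← tsum_mul_left]
    refine tsum_congr fun k => ?_
    have hpow2 : r ^ (2 * k + 1) = (t ^ 2 - y ^ 2) ^ k * r := by
      rw [pow_succ, pow_mul, hr2]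
    rw [Ck]
    field_simp [hrpos.ne']
    rw [div_pow, hpow2]
    field_simp


lemma integral_sq_pow (t : ℝ) (ht : 0 < t) : ∀ k : ℕ,
    (∫ y in (-t)..t, (t ^ 2 - y ^ 2) ^ k)
      = 2 * t ^ (2 * k + 1) * 4 ^ k * (Nat.factorial k : ℝ) ^ 2 / (Nat.factorial (2 * k + 1)) := by
  intro k
  induction k with
  | zero => simp [two_mul]
  | succ k ih =>
    -- derivative of y * (t^2 - y^2)^(k+1)
    have hder : ∀ y : ℝ, HasDerivAt (fun y : ℝ => y * (t ^ 2 - y ^ 2) ^ (k + 1))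
        (1 * (t ^ 2 - y ^ 2) ^ (k + 1) +
          y * (((k : ℝ) + 1) * (t ^ 2 - y ^ 2) ^ k * (-(2 * y)))) y := by
      intro y
      have h1 : HasDerivAt (fun y : ℝ => t ^ 2 - y ^ 2) (-(2 * y)) y := by
        simpa using ((hasDerivAt_pow 2 y).const_sub (t ^ 2))
      have h2 := h1.pow (k + 1)
      simp only [Nat.add_sub_cancel, Nat.cast_add, Nat.cast_one] at h2
      exact (hasDerivAt_id y).mul h2
    have hzero : (∫ y in (-t)..t, (1 * (t ^ 2 - y ^ 2) ^ (k + 1) +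
        y * (((k : ℝ) + 1) * (t ^ 2 - y ^ 2) ^ k * (-(2 * y))))) = 0 := by
      rw [intervalIntegral.integral_eq_sub_of_hasDerivAt (fun y _ => hder y)
        (Continuous.intervalIntegrable (by fun_prop) _ _)]
      simp
    have key : ∀ y : ℝ, 1 * (t ^ 2 - y ^ 2) ^ (k + 1) +
        y * (((k : ℝ) + 1) * (t ^ 2 - y ^ 2) ^ k * (-(2 * y)))
        = (2 * (k : ℝ) + 3) * (t ^ 2 - y ^ 2) ^ (k + 1)
          - ((2 * (k : ℝ) + 2) * t ^ 2) * (t ^ 2 - y ^ 2) ^ k := by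
      intro y
      ring
    rw [intervalIntegral.integral_congr (g := fun y => (2 * (k : ℝ) + 3) * (t ^ 2 - y ^ 2) ^ (k + 1)
          - ((2 * (k : ℝ) + 2) * t ^ 2) * (t ^ 2 - y ^ 2) ^ k) (fun y _ => key y)] at hzero
    rw [intervalIntegral.integral_sub ((Continuous.intervalIntegrable (by fun_prop) _ _))
        ((Continuous.intervalIntegrable (by fun_prop) _ _)),
      intervalIntegral.integral_const_mul, intervalIntegral.integral_const_mul, ih] at hzero
    have hP : (∫ y in (-t)..t, (t ^ 2 - y ^ 2) ^ (k + 1))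
        = ((2 * (k : ℝ) + 2) * t ^ 2) * (2 * t ^ (2 * k + 1) * 4 ^ k * (Nat.factorial k : ℝ) ^ 2
            / (Nat.factorial (2 * k + 1))) / (2 * (k : ℝ) + 3) := by
      have h3 : (2 * (k : ℝ) + 3) ≠ 0 := by positivity
      field_simp at hzero ⊢
      linarith [hzero]
    rw [hP]
    have hf1 : ((Nat.factorial (k + 1) : ℝ)) = ((k : ℝ) + 1) * Nat.factorial k := by
      push_cast [Nat.factorial_succ]; ring
    have hf2 : ((Nat.factorial (2 * (k + 1) + 1) : ℝ))
        = (2 * (k : ℝ) + 3) * ((2 * (k : ℝ) + 2) * Nat.factorial (2 * k + 1)) := by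
      have : 2 * (k + 1) + 1 = (2 * k + 1 + 1) + 1 := by ring
      rw [this, Nat.factorial_succ, Nat.factorial_succ]
      push_cast; ring
    have hne1 : ((Nat.factorial (2 * k + 1) : ℝ)) ≠ 0 := by positivity
    have hne2 : ((Nat.factorial (2 * (k + 1) + 1) : ℝ)) ≠ 0 := by positivity
    rw [hf1, hf2]
    have h3 : (2 * (k : ℝ) + 3) ≠ 0 := by positivity
    field_simp
    ring


end Aux

/-- `∫₋ₜᵗ (t/√(t²−y²))(I₁ − J₁)(√(t²−y²)) dy = 2 cosh t + 2 cos t − 4`. -/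
theorem integral_I1_sub_J1 (t : ℝ) (ht : 0 < t) :
    (∫ y in (-t)..t, t / Real.sqrt (t ^ 2 - y ^ 2) *
        (besselI1 (Real.sqrt (t ^ 2 - y ^ 2)) - besselJ1 (Real.sqrt (t ^ 2 - y ^ 2)))) =
      2 * Real.cosh t + 2 * Real.cos t - 4 := by
  have hle : -t ≤ t := by linarith
  set f : ℕ → ℝ → ℝ := fun k y => Ck t k * (t ^ 2 - y ^ 2) ^ k with hf
  have hcont : ∀ k, Continuous (f k) := fun k => by
    simp only [hf]; fun_prop
  have hInt : ∀ k, IntegrableOn (f k) (Set.Ioc (-t) t) := fun k =>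
    (hcont k).integrableOn_Ioc
  -- sign and squared bounds on the interval
  have hy2 : ∀ y ∈ Set.Ioc (-t) t, 0 ≤ t ^ 2 - y ^ 2 := by
    intro y hy
    have h1 : -t ≤ y := hy.1.le
    have h2 : y ≤ t := hy.2
    nlinarith
  have hb : ∀ k : ℕ, -1 ≤ (-1 : ℝ) ^ k ∧ (-1 : ℝ) ^ k ≤ 1 := by
    intro k
    rcases Nat.even_or_odd k with h | h
    · rw [h.neg_one_pow]; norm_num
    · rw [h.neg_one_pow]; norm_num
  have hCk_nonneg : ∀ k, 0 ≤ Ck t k := by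
    intro k
    have h1 := (hb k).2
    simp only [Ck]
    apply div_nonneg (by nlinarith) (by positivity)
  have hbound : ∀ k, ∀ y ∈ Set.Ioc (-t) t, ‖f k y‖ ≤ 2 * t * t * ((t ^ 2 / 4) ^ k / (Nat.factorial k : ℝ)) / (2 * t) := by
    intro k y hy
    have h0 : 0 ≤ t ^ 2 - y ^ 2 := hy2 y hy
    have hfnn : 0 ≤ f k y := mul_nonneg (hCk_nonneg k) (pow_nonneg h0 k)
    rw [Real.norm_eq_abs, abs_of_nonneg hfnn]
    have hm1 : (1 : ℝ) - (-1) ^ k ≤ 2 := by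
      have := (hb k).1
      linarith
    have hk1 : (1 : ℝ) ≤ (Nat.factorial (k + 1) : ℝ) := by
      exact_mod_cast Nat.one_le_iff_ne_zero.mpr (Nat.factorial_ne_zero _)
    calc f k y = (1 - (-1 : ℝ) ^ k) * t * (t ^ 2 - y ^ 2) ^ k
          / (2 ^ (2 * k + 1) * ((Nat.factorial k : ℝ) * (Nat.factorial (k + 1)))) := by
          simp only [hf, Ck]; ring
      _ ≤ 2 * t * (t ^ 2) ^ k / (2 ^ (2 * k + 1) * ((Nat.factorial k : ℝ) * 1)) := by
          gcongr <;> first | exact hm1 | exact hk1 | nlinarith | positivity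
      _ = 2 * t * t * ((t ^ 2 / 4) ^ k / (Nat.factorial k : ℝ)) / (2 * t) := by
          have h2p : (2 : ℝ) ^ (2 * k + 1) = 2 * 4 ^ k := by
            rw [pow_succ, pow_mul]; norm_num; ring
          rw [h2p, div_pow]
          have hkne : ((Nat.factorial k : ℝ)) ≠ 0 := by positivity
          field_simp
  have hnorm_sum : Summable (fun k => ∫ y in Set.Ioc (-t) t, ‖f k y‖) := by
    apply Summable.of_nonneg_of_le (fun k => integral_nonneg fun y => norm_nonneg _) (fun k => ?_)
      ((Real.summable_pow_div_factorial (t ^ 2 / 4)).mul_left (2 * t * t))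
    calc (∫ y in Set.Ioc (-t) t, ‖f k y‖)
        ≤ ∫ _y in Set.Ioc (-t) t, (2 * t * t * ((t ^ 2 / 4) ^ k / (Nat.factorial k : ℝ)) / (2 * t)) := by
          apply setIntegral_mono_on ((hInt k).norm) (integrableOn_const measure_Ioc_lt_top.ne)
            measurableSet_Ioc (hbound k)
      _ = 2 * t * t * ((t ^ 2 / 4) ^ k / (Nat.factorial k : ℝ)) := by
          rw [setIntegral_const, smul_eq_mul, measureReal_def, Real.volume_Ioc,
            ENNReal.toReal_ofReal (by linarith : (0:ℝ) ≤ t - -t)]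
          have : t - -t = 2 * t := by ring
          rw [this]
          field_simp
  have hswap := MeasureTheory.integral_tsum_of_summable_integral_norm
    (μ := volume.restrict (Set.Ioc (-t) t)) (F := f) hInt hnorm_sum
  rw [intervalIntegral.integral_of_le hle,
    setIntegral_congr_fun measurableSet_Ioc
      (fun y hy => pointwise_eq t y (hy2 y hy)), ← hswap]
  -- compute each integral
  have hval : ∀ k : ℕ, (∫ y in Set.Ioc (-t) t, f k y)
      = 2 * (t ^ (2 * (k + 1)) / (Nat.factorial (2 * (k + 1)) : ℝ))
        + 2 * ((-1 : ℝ) ^ (k + 1) * t ^ (2 * (k + 1)) / (Nat.factorial (2 * (k + 1)) : ℝ)) := by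
    intro k
    rw [← intervalIntegral.integral_of_le hle]
    have : (∫ y in (-t)..t, f k y) = Ck t k * ∫ y in (-t)..t, (t ^ 2 - y ^ 2) ^ k := by
      rw [hf]; exact intervalIntegral.integral_const_mul _ _
    rw [this, integral_sq_pow t ht k]
    simp only [Ck]
    have hf1 : ((Nat.factorial (k + 1) : ℝ)) = ((k : ℝ) + 1) * Nat.factorial k := by
      push_cast [Nat.factorial_succ]; ring
    have hf2 : ((Nat.factorial (2 * (k + 1)) : ℝ))
        = (2 * (k : ℝ) + 2) * Nat.factorial (2 * k + 1) := by
      have h : 2 * (k + 1) = (2 * k + 1) + 1 := by ring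
      rw [h, Nat.factorial_succ]; push_cast; ring
    have h2p : (2 : ℝ) ^ (2 * k + 1) = 2 * 4 ^ k := by
      rw [pow_succ, pow_mul]; norm_num; ring
    have hne1 : ((Nat.factorial (2 * k + 1) : ℝ)) ≠ 0 := by positivity
    have hne3 : ((Nat.factorial k : ℝ)) ≠ 0 := by positivity
    rw [hf1, hf2, h2p]
    have hpow : (-1 : ℝ) ^ (k + 1) = -(-1 : ℝ) ^ k := by rw [pow_succ]; ring
    rw [hpow]
    field_simp
    ring
  rw [tsum_congr hval]
  -- sum the series
  have hcosh := Real.hasSum_cosh t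
  have hcos := Real.hasSum_cos t
  have h1 : HasSum (fun k : ℕ => t ^ (2 * (k + 1)) / (Nat.factorial (2 * (k + 1)) : ℝ))
      (Real.cosh t - 1) := by
    apply (hasSum_nat_add_iff (f := fun n : ℕ => t ^ (2 * n) / (Nat.factorial (2 * n) : ℝ)) 1).mpr
    convert hcosh using 1
    · rfl
    simp [Nat.factorial]
  have h2 : HasSum (fun k : ℕ => (-1 : ℝ) ^ (k + 1) * t ^ (2 * (k + 1)) / (Nat.factorial (2 * (k + 1)) : ℝ))
      (Real.cos t - 1) := by
    apply (hasSum_nat_add_iff (f := fun n : ℕ => (-1 : ℝ) ^ n * t ^ (2 * n) / (Nat.factorial (2 * n) : ℝ)) 1).mpr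
    convert hcos using 1
    · rfl
    simp [Nat.factorial]
  have hsum := (h1.mul_left 2).add (h2.mul_left 2)
  rw [hsum.tsum_eq]
  ring
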